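/- Let Φ = (A; {E_i}; A*; {E*_i}) be a Leonard system with parameter array ({θ_i}; {θ*_i}; {φ_i}; {ϕ_i}). Then for 0 ≤ i,j ≤ d, E_d τ*_i(A*) η_j(A) E*_0 = δ_{ij} ϕ_1 ϕ_2 ⋯ ϕ_i E_d E*_0. -/

import Mathlib

open Matrix Polynomial

/-- A Leonard system in the matrix algebra `Mat_{d+1}(K)`: multiplicity-free
elements `A`, `Astar` with orderings `E`, `Estar` of their primitive idempotents
satisfying the irreducible-tridiagonality conditions. -/
structure LeonardSystem (K : Type*) [Field K] (d : ℕ) where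
  A : Matrix (Fin (d+1)) (Fin (d+1)) K
  Astar : Matrix (Fin (d+1)) (Fin (d+1)) K
  E : Fin (d+1) → Matrix (Fin (d+1)) (Fin (d+1)) K
  Estar : Fin (d+1) → Matrix (Fin (d+1)) (Fin (d+1)) K
  θ : Fin (d+1) → K
  θs : Fin (d+1) → K
  θ_inj : Function.Injective θ
  θs_inj : Function.Injective θs
  E_ne : ∀ i, E i ≠ 0
  Es_ne : ∀ i, Estar i ≠ 0
  E_mul : ∀ i j, E i * E j = if i = j then E i else 0
  Es_mul : ∀ i j, Estar i * Estar j = if i = j then Estar i else 0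
  E_sum : ∑ i, E i = 1
  Es_sum : ∑ i, Estar i = 1
  A_eq : A = ∑ i, θ i • E i
  As_eq : Astar = ∑ i, θs i • Estar i
  trid0 : ∀ i j : Fin (d+1), ((i : ℤ) - (j : ℤ)).natAbs > 1 → E i * Astar * E j = 0
  trid1 : ∀ i j : Fin (d+1), ((i : ℤ) - (j : ℤ)).natAbs = 1 → E i * Astar * E j ≠ 0
  strid0 : ∀ i j : Fin (d+1), ((i : ℤ) - (j : ℤ)).natAbs > 1 → Estar i * A * Estar j = 0
  strid1 : ∀ i j : Fin (d+1), ((i : ℤ) - (j : ℤ)).natAbs = 1 → Estar i * A * Estar j ≠ 0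

namespace LeonardSystem

variable {K : Type*} [Field K] {d : ℕ}

/-- Eigenvalues indexed by `ℕ` (junk value outside range). -/
def θN (L : LeonardSystem K d) (i : ℕ) : K := if h : i < d + 1 then L.θ ⟨i, h⟩ else 0

def θsN (L : LeonardSystem K d) (i : ℕ) : K := if h : i < d + 1 then L.θs ⟨i, h⟩ else 0

/-- `τ_i(A) = (A-θ₀)(A-θ₁)⋯(A-θ_{i-1})`. -/
def tauA (L : LeonardSystem K d) : ℕ → Matrix (Fin (d+1)) (Fin (d+1)) K
  | 0 => 1
  | i + 1 => L.tauA i * (L.A - L.θN i • 1)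

/-- `η_i(A) = (A-θ_d)(A-θ_{d-1})⋯(A-θ_{d-i+1})`. -/
def etaA (L : LeonardSystem K d) : ℕ → Matrix (Fin (d+1)) (Fin (d+1)) K
  | 0 => 1
  | i + 1 => L.etaA i * (L.A - L.θN (d - i) • 1)

/-- `τ*_i(A*)`. -/
def tausA (L : LeonardSystem K d) : ℕ → Matrix (Fin (d+1)) (Fin (d+1)) K
  | 0 => 1
  | i + 1 => L.tausA i * (L.Astar - L.θsN i • 1)

/-- `η*_i(A*)`. -/
def etasA (L : LeonardSystem K d) : ℕ → Matrix (Fin (d+1)) (Fin (d+1)) K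
  | 0 => 1
  | i + 1 => L.etasA i * (L.Astar - L.θsN (d - i) • 1)

/-- Scalar `τ_i(x)`. -/
def tauS (L : LeonardSystem K d) (i : ℕ) (x : K) : K := ∏ j ∈ Finset.range i, (x - L.θN j)

/-- Scalar `η_i(x)`. -/
def etaS (L : LeonardSystem K d) (i : ℕ) (x : K) : K := ∏ j ∈ Finset.range i, (x - L.θN (d - j))

/-- Scalar `τ*_i(x)`. -/
def tausS (L : LeonardSystem K d) (i : ℕ) (x : K) : K := ∏ j ∈ Finset.range i, (x - L.θsN j)

/-- Scalar `η*_i(x)`. -/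
def etasS (L : LeonardSystem K d) (i : ℕ) (x : K) : K := ∏ j ∈ Finset.range i, (x - L.θsN (d - j))

/-- First split sequence `φ_i`. -/
noncomputable def varphi (L : LeonardSystem K d) (i : ℕ) : K :=
  (L.θsN 0 - L.θsN i) * (L.tauA i * L.Estar 0).trace / (L.tauA (i-1) * L.Estar 0).trace

/-- Second split sequence `ϕ_i`. -/
noncomputable def phi (L : LeonardSystem K d) (i : ℕ) : K :=
  (L.θsN 0 - L.θsN i) * (L.etaA i * L.Estar 0).trace / (L.etaA (i-1) * L.Estar 0).trace

/-- `φ₁φ₂⋯φ_r`. -/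
noncomputable def varphiProd (L : LeonardSystem K d) (r : ℕ) : K :=
  ∏ j ∈ Finset.range r, L.varphi (j + 1)

/-- `ϕ₁ϕ₂⋯ϕ_r`. -/
noncomputable def phiProd (L : LeonardSystem K d) (r : ℕ) : K :=
  ∏ j ∈ Finset.range r, L.phi (j + 1)

/-- `φ_d φ_{d-1} ⋯ φ_{d-r+1}`. -/
noncomputable def varphiRevProd (L : LeonardSystem K d) (r : ℕ) : K :=
  ∏ j ∈ Finset.range r, L.varphi (d - j)

/-- `ϕ_d ϕ_{d-1} ⋯ ϕ_{d-r+1}`. -/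
noncomputable def phiRevProd (L : LeonardSystem K d) (r : ℕ) : K :=
  ∏ j ∈ Finset.range r, L.phi (d - j)

end LeonardSystem
section Aux

variable {K : Type*} [Field K] {n : ℕ}

lemma vmv_mulVec (u v x : Fin n → K) : vecMulVec u v *ᵥ x = (v ⬝ᵥ x) • u := by
  ext a
  simp only [mulVec, vecMulVec_apply, dotProduct, Pi.smul_apply, smul_eq_mul,
    Finset.sum_mul, Finset.mul_sum]
  exact Finset.sum_congr rfl fun j _ => by ring

lemma mul_vmv (M : Matrix (Fin n) (Fin n) K) (u v : Fin n → K) :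
    M * vecMulVec u v = vecMulVec (M *ᵥ u) v := by
  ext a b
  simp only [mul_apply, vecMulVec_apply, mulVec, dotProduct, Finset.sum_mul]
  exact Finset.sum_congr rfl fun j _ => by ring

lemma vmv_mul_vmv (u v u' v' : Fin n → K) :
    vecMulVec u v * vecMulVec u' v' = (v ⬝ᵥ u') • vecMulVec u v' := by
  ext a b
  simp only [mul_apply, vecMulVec_apply, Matrix.smul_apply, smul_eq_mul, dotProduct, Finset.sum_mul]
  exact Finset.sum_congr rfl fun j _ => by ring

lemma vmv_ne_zero {u v : Fin n → K} (hu : u ≠ 0) (hv : v ≠ 0) : vecMulVec u v ≠ 0 := by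
  obtain ⟨a, ha⟩ := Function.ne_iff.mp hu
  obtain ⟨b, hb⟩ := Function.ne_iff.mp hv
  intro h
  have := congrFun (congrFun h a) b
  simp only [vecMulVec_apply, Matrix.zero_apply] at this
  exact (mul_ne_zero (by simpa using ha) (by simpa using hb)) this

lemma trace_mul_vmv (M : Matrix (Fin n) (Fin n) K) (u v : Fin n → K) :
    (M * vecMulVec u v).trace = v ⬝ᵥ (M *ᵥ u) := by
  rw [mul_vmv]
  simp only [trace, diag, vecMulVec_apply, dotProduct]
  exact Finset.sum_congr rfl fun j _ => by ring


lemma exists_rank_one (E : Fin n → Matrix (Fin n) (Fin n) K) (hne : ∀ i, E i ≠ 0)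
    (hmul : ∀ i j, E i * E j = if i = j then E i else 0) (hsum : ∑ i, E i = 1) (i : Fin n) :
    ∃ p q : Fin n → K, E i = vecMulVec p q ∧ q ⬝ᵥ p = 1 := by
  classical
  set W : Fin n → Submodule K (Fin n → K) := fun j => LinearMap.range (E j).mulVecLin with hW
  -- each W j nonzero
  have hWne : ∀ j, W j ≠ ⊥ := by
    intro j hbot
    apply hne j
    ext a b
    have : (E j) *ᵥ (Pi.single b 1) = 0 := by
      have : (E j).mulVecLin (Pi.single b 1) ∈ W j := ⟨_, rfl⟩
      rw [hbot] at this
      simpa [Matrix.mulVecLin_apply] using this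
    have := congrFun this a
    simpa [Matrix.mulVec_single] using this
  -- membership in W j means fixed by E j
  have hfix : ∀ j x, x ∈ W j → (E j) *ᵥ x = x := by
    rintro j x ⟨y, rfl⟩
    simp only [Matrix.mulVecLin_apply, Matrix.mulVec_mulVec]
    rw [show E j * E j = E j from by simpa using hmul j j]
  have hkill : ∀ j k x, j ≠ k → x ∈ W k → (E j) *ᵥ x = 0 := by
    rintro j k x hjk ⟨y, rfl⟩
    simp only [Matrix.mulVecLin_apply, Matrix.mulVec_mulVec]
    rw [show E j * E k = 0 from by simpa [hjk] using hmul j k]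
    simp
  -- partial sups
  have hdisj : ∀ (s : Finset (Fin n)) (j : Fin n), j ∉ s →
      (⨆ k ∈ s, W k) ⊓ W j = ⊥ := by
    intro s j hj
    rw [Submodule.eq_bot_iff]
    rintro x ⟨hx1, hx2⟩
    have hker : (⨆ k ∈ s, W k) ≤ LinearMap.ker (E j).mulVecLin := by
      refine iSup₂_le fun k hk => ?_
      intro y hy
      simp only [LinearMap.mem_ker, Matrix.mulVecLin_apply]
      exact hkill j k y (fun h => hj (h ▸ hk)) hy
    have h0 : (E j) *ᵥ x = 0 := by simpa [Matrix.mulVecLin_apply] using hker hx1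
    rw [← hfix j x hx2, h0]
  have hrank : ∀ s : Finset (Fin n),
      Module.finrank K ↥(⨆ k ∈ s, W k) = ∑ k ∈ s, Module.finrank K ↥(W k) := by
    intro s
    induction s using Finset.induction with
    | empty => simp
    | @insert j s hj ih =>
      rw [Finset.sum_insert hj, ← ih]
      rw [Finset.iSup_insert]
      have := Submodule.finrank_sup_add_finrank_inf_eq (W j) (⨆ k ∈ s, W k)
      rw [inf_comm, hdisj s j hj] at this
      simpa using this
  have htop : (⨆ k ∈ (Finset.univ : Finset (Fin n)), W k) = ⊤ := by
    rw [eq_top_iff]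
    intro x _
    have hx : x = ∑ k, (E k) *ᵥ x := by
      have : (∑ k, E k) *ᵥ x = ∑ k, (E k) *ᵥ x :=
        map_sum (Matrix.mulVec.addMonoidHomLeft x) _ _
      rw [← this, hsum, Matrix.one_mulVec]
    rw [hx]
    exact Submodule.sum_mem _ fun k _ =>
      (le_iSup₂ (f := fun k _ => W k) k (Finset.mem_univ k)) ⟨x, rfl⟩
  -- finrank counting
  have hcount : ∑ k, Module.finrank K ↥(W k) = n := by
    rw [← hrank, htop]
    simp [finrank_top, Module.finrank_pi]
  have hone : Module.finrank K ↥(W i) = 1 := by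
    have hge : ∀ k, 1 ≤ Module.finrank K ↥(W k) := by
      intro k
      have : W k ≠ ⊥ := hWne k
      obtain ⟨y, hy, hy0⟩ := Submodule.exists_mem_ne_zero_of_ne_bot this
      refine Module.finrank_pos_iff.mpr ⟨⟨y, hy⟩, 0, ?_⟩
      simpa using hy0
    by_contra h
    have h2 : 2 ≤ Module.finrank K ↥(W i) := by
      have := hge i
      omega
    have hsplit : ∑ k ∈ Finset.univ.erase i, Module.finrank K ↥(W k)
        + Module.finrank K ↥(W i) = ∑ k, Module.finrank K ↥(W k) :=
      Finset.sum_erase_add Finset.univ (fun k => Module.finrank K ↥(W k)) (Finset.mem_univ i)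
    have h3 : (Finset.univ.erase i).card ≤
        ∑ k ∈ Finset.univ.erase i, Module.finrank K ↥(W k) := by
      classical
      calc (Finset.univ.erase i).card = ∑ _k ∈ Finset.univ.erase i, 1 := by simp
      _ ≤ _ := Finset.sum_le_sum fun k _ => hge k
    have hcard : (Finset.univ.erase i).card = n - 1 := by
      simp [Finset.card_erase_of_mem]
    have hn : 1 ≤ n := Nat.pos_of_ne_zero (by rintro rfl; exact i.elim0)
    omega
  -- extract the vector
  obtain ⟨⟨p, hpW⟩, hp0, hgen⟩ := finrank_eq_one_iff'.mp hone
  have hp0' : p ≠ 0 := fun h => hp0 (Subtype.ext h)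
  choose q hq using fun j : Fin n => hgen ⟨(E i).mulVecLin (Pi.single j 1), ⟨_, rfl⟩⟩
  refine ⟨p, q, ?_, ?_⟩
  · ext a b
    have := congrArg Subtype.val (hq b)
    have h1 : q b • p = (E i) *ᵥ (Pi.single b 1) := by
      simpa [Matrix.mulVecLin_apply] using this
    have := congrFun h1 a
    simp only [Pi.smul_apply, smul_eq_mul] at this
    rw [vecMulVec_apply]
    rw [mul_comm, this]
    simp [Matrix.mulVec_single]
  · -- q ⬝ᵥ p = 1
    have hEeq : E i = vecMulVec p q := by
      ext a b
      have := congrArg Subtype.val (hq b)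
      have h1 : q b • p = (E i) *ᵥ (Pi.single b 1) := by
        simpa [Matrix.mulVecLin_apply] using this
      have := congrFun h1 a
      simp only [Pi.smul_apply, smul_eq_mul] at this
      rw [vecMulVec_apply, mul_comm, this]
      simp [Matrix.mulVec_single]
    have hid : E i * E i = E i := by simpa using hmul i i
    rw [hEeq, vmv_mul_vmv] at hid
    by_contra hqp
    have : (q ⬝ᵥ p - 1) • vecMulVec p q = 0 := by
      rw [sub_smul, one_smul, hid]
      exact sub_self _
    rcases smul_eq_zero.mp this with h | h
    · exact hqp (sub_eq_zero.mp h)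
    · exact hne i (hEeq.trans h)

namespace LeonardSystem
variable {K : Type*} [Field K] {d : ℕ}

/-- Rank-one representation data for a Leonard system. -/
structure Rep (L : LeonardSystem K d) where
  p : Fin (d+1) → Fin (d+1) → K
  q : Fin (d+1) → Fin (d+1) → K
  u : Fin (d+1) → Fin (d+1) → K
  v : Fin (d+1) → Fin (d+1) → K
  hE : ∀ r, L.E r = vecMulVec (p r) (q r)
  hEs : ∀ h, L.Estar h = vecMulVec (u h) (v h)
  hqp : ∀ r s, q r ⬝ᵥ p s = if r = s then 1 else 0
  hvu : ∀ r s, v r ⬝ᵥ u s = if r = s then 1 else 0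

theorem exists_rep (L : LeonardSystem K d) : Nonempty (L.Rep) := by
  classical
  choose p q hpq h1 using exists_rank_one L.E L.E_ne L.E_mul L.E_sum
  choose u v huv h2 using exists_rank_one L.Estar L.Es_ne L.Es_mul L.Es_sum
  have horth : ∀ (E' : Fin (d+1) → Matrix (Fin (d+1)) (Fin (d+1)) K)
      (p' q' : Fin (d+1) → Fin (d+1) → K),
      (∀ i j, E' i * E' j = if i = j then E' i else 0) →
      (∀ i, E' i = vecMulVec (p' i) (q' i)) →
      (∀ i, q' i ⬝ᵥ p' i = 1) →
      ∀ r s, q' r ⬝ᵥ p' s = if r = s then 1 else 0 := by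
    intro E' p' q' hmul' heq' hone' r s
    by_cases hrs : r = s
    · subst hrs; simp [hone' r]
    · simp only [hrs, if_false]
      have h0 : E' r * E' s = 0 := by simpa [hrs] using hmul' r s
      rw [heq' r, heq' s, vmv_mul_vmv] at h0
      rcases smul_eq_zero.mp h0 with h | h
      · exact h
      · exfalso
        have hp : p' r ≠ 0 := by
          intro hp0
          have := hone' r
          rw [hp0] at this
          simp at this
        have hq : q' s ≠ 0 := by
          intro hq0
          have := hone' s
          rw [hq0] at this
          simp at this
        exact vmv_ne_zero hp hq h
  exact ⟨⟨p, q, u, v, hpq, huv, horth L.E p q L.E_mul hpq h1,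
    horth L.Estar u v L.Es_mul huv h2⟩⟩

section WithRep
variable {L : LeonardSystem K d} (R : L.Rep)

/-- ℕ-indexed versions (junk value `0` out of range). -/
def Rep.pN (r : ℕ) : Fin (d+1) → K := if h : r < d + 1 then R.p ⟨r, h⟩ else 0
def Rep.qN (r : ℕ) : Fin (d+1) → K := if h : r < d + 1 then R.q ⟨r, h⟩ else 0
def Rep.uN (r : ℕ) : Fin (d+1) → K := if h : r < d + 1 then R.u ⟨r, h⟩ else 0
def Rep.vN (r : ℕ) : Fin (d+1) → K := if h : r < d + 1 then R.v ⟨r, h⟩ else 0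

lemma Rep.pN_coe (r : Fin (d+1)) : R.pN (r : ℕ) = R.p r := by unfold Rep.pN; exact dif_pos r.isLt
lemma Rep.qN_coe (r : Fin (d+1)) : R.qN (r : ℕ) = R.q r := by unfold Rep.qN; exact dif_pos r.isLt
lemma Rep.uN_coe (r : Fin (d+1)) : R.uN (r : ℕ) = R.u r := by unfold Rep.uN; exact dif_pos r.isLt
lemma Rep.vN_coe (r : Fin (d+1)) : R.vN (r : ℕ) = R.v r := by unfold Rep.vN; exact dif_pos r.isLt

lemma Rep.qN_pN (r s : ℕ) :
    R.qN r ⬝ᵥ R.pN s = if r = s ∧ r < d + 1 then 1 else 0 := by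
  unfold Rep.qN Rep.pN
  by_cases h1 : r < d + 1
  · by_cases h2 : s < d + 1
    · rw [dif_pos h1, dif_pos h2, R.hqp]
      by_cases h3 : r = s
      · subst h3
        simp [h1]
      · have : ¬ (⟨r, h1⟩ : Fin (d+1)) = ⟨s, h2⟩ := fun h => h3 (by simpa using congrArg Fin.val h)
        simp [this, h3]
    · rw [dif_pos h1, dif_neg h2, if_neg (by omega)]
      simp [dotProduct]
  · rw [dif_neg h1, if_neg (by omega)]
    simp [dotProduct]

lemma Rep.vN_uN (r s : ℕ) :
    R.vN r ⬝ᵥ R.uN s = if r = s ∧ r < d + 1 then 1 else 0 := by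
  unfold Rep.vN Rep.uN
  by_cases h1 : r < d + 1
  · by_cases h2 : s < d + 1
    · rw [dif_pos h1, dif_pos h2, R.hvu]
      by_cases h3 : r = s
      · subst h3
        simp [h1]
      · have : ¬ (⟨r, h1⟩ : Fin (d+1)) = ⟨s, h2⟩ := fun h => h3 (by simpa using congrArg Fin.val h)
        simp [this, h3]
    · rw [dif_pos h1, dif_neg h2, if_neg (by omega)]
      simp [dotProduct]
  · rw [dif_neg h1, if_neg (by omega)]
    simp [dotProduct]


/-- helper: sum of mulVec -/
lemma mulVec_sumF {n m : ℕ} (M : Matrix (Fin n) (Fin n) K) (f : Fin m → (Fin n → K)) :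
    M *ᵥ (∑ k, f k) = ∑ k, M *ᵥ f k := by
  ext a
  simp only [Matrix.mulVec, dotProduct, Finset.sum_apply, Finset.mul_sum]
  exact Finset.sum_comm

lemma dot_sumF {n m : ℕ} (w : Fin n → K) (f : Fin m → (Fin n → K)) :
    w ⬝ᵥ (∑ k, f k) = ∑ k, w ⬝ᵥ f k := by
  simp [dotProduct, Finset.mul_sum, Finset.sum_apply]
  exact Finset.sum_comm

/-- expansion in the `p`-basis -/
lemma Rep.p_expand (x : Fin (d+1) → K) :
    x = ∑ r : Fin (d+1), (R.qN r ⬝ᵥ x) • R.pN r := by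
  have h1 : (1 : Matrix (Fin (d+1)) (Fin (d+1)) K) *ᵥ x = x := Matrix.one_mulVec x
  rw [← L.E_sum] at h1
  have h2 : (∑ r, L.E r) *ᵥ x = ∑ r, L.E r *ᵥ x :=
    map_sum (Matrix.mulVec.addMonoidHomLeft x) _ _
  rw [h2] at h1
  conv_lhs => rw [← h1]
  refine Finset.sum_congr rfl fun r _ => ?_
  rw [R.hE r, vmv_mulVec, R.pN_coe, R.qN_coe]

lemma Rep.u_expand (x : Fin (d+1) → K) :
    x = ∑ h : Fin (d+1), (R.vN h ⬝ᵥ x) • R.uN h := by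
  have h1 : (1 : Matrix (Fin (d+1)) (Fin (d+1)) K) *ᵥ x = x := Matrix.one_mulVec x
  rw [← L.Es_sum] at h1
  have h2 : (∑ r, L.Estar r) *ᵥ x = ∑ r, L.Estar r *ᵥ x :=
    map_sum (Matrix.mulVec.addMonoidHomLeft x) _ _
  rw [h2] at h1
  conv_lhs => rw [← h1]
  refine Finset.sum_congr rfl fun r _ => ?_
  rw [R.hEs r, vmv_mulVec, R.uN_coe, R.vN_coe]

/-- if all coordinates vanish, the vector is zero -/
lemma Rep.eq_zero_of_vN {x : Fin (d+1) → K} (hx : ∀ h : Fin (d+1), R.vN (h : ℕ) ⬝ᵥ x = 0) :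
    x = 0 := by
  have := R.u_expand x
  rw [this]
  exact Finset.sum_eq_zero fun h _ => by rw [hx h, zero_smul]

lemma Rep.eq_zero_of_qN {x : Fin (d+1) → K} (hx : ∀ r : Fin (d+1), R.qN (r : ℕ) ⬝ᵥ x = 0) :
    x = 0 := by
  have := R.p_expand x
  rw [this]
  exact Finset.sum_eq_zero fun h _ => by rw [hx h, zero_smul]

/-- eigen-relations -/
lemma Rep.A_mulVec_pN (r : ℕ) : L.A *ᵥ R.pN r = L.θN r • R.pN r := by
  unfold Rep.pN LeonardSystem.θN
  by_cases h : r < d + 1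
  · rw [dif_pos h, dif_pos h]
    have hAE : L.A * L.E ⟨r, h⟩ = L.θ ⟨r, h⟩ • L.E ⟨r, h⟩ := by
      rw [L.A_eq, Finset.sum_mul]
      have : ∀ s : Fin (d+1), (L.θ s • L.E s) * L.E ⟨r, h⟩
          = if s = ⟨r, h⟩ then L.θ s • L.E s else 0 := by
        intro s
        rw [Matrix.smul_mul, L.E_mul]
        split_ifs with hs
        · subst hs; rfl
        · simp
      rw [Finset.sum_congr rfl fun s _ => this s, Finset.sum_ite_eq' Finset.univ]
      simp
    have hp : L.E ⟨r, h⟩ *ᵥ R.p ⟨r, h⟩ = R.p ⟨r, h⟩ := by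
      rw [R.hE, vmv_mulVec]
      have := R.hqp ⟨r, h⟩ ⟨r, h⟩
      rw [if_pos rfl] at this
      rw [this, one_smul]
    calc L.A *ᵥ R.p ⟨r, h⟩ = L.A *ᵥ (L.E ⟨r, h⟩ *ᵥ R.p ⟨r, h⟩) := by rw [hp]
    _ = (L.A * L.E ⟨r, h⟩) *ᵥ R.p ⟨r, h⟩ := Matrix.mulVec_mulVec _ _ _
    _ = (L.θ ⟨r, h⟩ • L.E ⟨r, h⟩) *ᵥ R.p ⟨r, h⟩ := by rw [hAE]
    _ = L.θ ⟨r, h⟩ • (L.E ⟨r, h⟩ *ᵥ R.p ⟨r, h⟩) := Matrix.smul_mulVec _ _ _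
    _ = L.θ ⟨r, h⟩ • R.p ⟨r, h⟩ := by rw [hp]
  · rw [dif_neg h, dif_neg h]
    simp [Matrix.mulVec_zero]

lemma Rep.As_mulVec_uN (r : ℕ) : L.Astar *ᵥ R.uN r = L.θsN r • R.uN r := by
  unfold Rep.uN LeonardSystem.θsN
  by_cases h : r < d + 1
  · rw [dif_pos h, dif_pos h]
    have hAE : L.Astar * L.Estar ⟨r, h⟩ = L.θs ⟨r, h⟩ • L.Estar ⟨r, h⟩ := by
      rw [L.As_eq, Finset.sum_mul]
      have : ∀ s : Fin (d+1), (L.θs s • L.Estar s) * L.Estar ⟨r, h⟩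
          = if s = ⟨r, h⟩ then L.θs s • L.Estar s else 0 := by
        intro s
        rw [Matrix.smul_mul, L.Es_mul]
        split_ifs with hs
        · subst hs; rfl
        · simp
      rw [Finset.sum_congr rfl fun s _ => this s, Finset.sum_ite_eq' Finset.univ]
      simp
    have hp : L.Estar ⟨r, h⟩ *ᵥ R.u ⟨r, h⟩ = R.u ⟨r, h⟩ := by
      rw [R.hEs, vmv_mulVec]
      have := R.hvu ⟨r, h⟩ ⟨r, h⟩
      rw [if_pos rfl] at this
      rw [this, one_smul]
    calc L.Astar *ᵥ R.u ⟨r, h⟩ = L.Astar *ᵥ (L.Estar ⟨r, h⟩ *ᵥ R.u ⟨r, h⟩) := by rw [hp]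
    _ = (L.Astar * L.Estar ⟨r, h⟩) *ᵥ R.u ⟨r, h⟩ := Matrix.mulVec_mulVec _ _ _
    _ = (L.θs ⟨r, h⟩ • L.Estar ⟨r, h⟩) *ᵥ R.u ⟨r, h⟩ := by rw [hAE]
    _ = L.θs ⟨r, h⟩ • (L.Estar ⟨r, h⟩ *ᵥ R.u ⟨r, h⟩) := Matrix.smul_mulVec _ _ _
    _ = L.θs ⟨r, h⟩ • R.u ⟨r, h⟩ := by rw [hp]
  · rw [dif_neg h, dif_neg h]
    simp [Matrix.mulVec_zero]

/-- tridiagonal matrix entries -/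
def Rep.B (g h : ℕ) : K := R.vN g ⬝ᵥ (L.A *ᵥ R.uN h)
def Rep.Bs (g h : ℕ) : K := R.qN g ⬝ᵥ (L.Astar *ᵥ R.pN h)


/-- sandwich extraction: `Estar g * A * Estar h` as a scalar multiple -/
lemma Rep.Es_A_Es (g h : Fin (d+1)) :
    L.Estar g * L.A * L.Estar h = (R.B g h) • vecMulVec (R.u g) (R.v h) := by
  rw [R.hEs g, R.hEs h, mul_assoc, mul_vmv, vmv_mul_vmv]
  unfold Rep.B
  rw [R.vN_coe, R.uN_coe]

lemma Rep.E_As_E (g h : Fin (d+1)) :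
    L.E g * L.Astar * L.E h = (R.Bs g h) • vecMulVec (R.p g) (R.q h) := by
  rw [R.hE g, R.hE h, mul_assoc, mul_vmv, vmv_mul_vmv]
  unfold Rep.Bs
  rw [R.qN_coe, R.pN_coe]

lemma Rep.u_ne (g : Fin (d+1)) : R.u g ≠ 0 := by
  intro h0
  have := R.hvu g g
  rw [if_pos rfl, h0] at this
  simp at this

lemma Rep.v_ne (g : Fin (d+1)) : R.v g ≠ 0 := by
  intro h0
  have := R.hvu g g
  rw [if_pos rfl, h0] at this
  simp at this

lemma Rep.p_ne (g : Fin (d+1)) : R.p g ≠ 0 := by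
  intro h0
  have := R.hqp g g
  rw [if_pos rfl, h0] at this
  simp at this

lemma Rep.q_ne (g : Fin (d+1)) : R.q g ≠ 0 := by
  intro h0
  have := R.hqp g g
  rw [if_pos rfl, h0] at this
  simp at this

lemma Rep.B_zero {g h : ℕ} (hgh : g > h + 1 ∨ h > g + 1) : R.B g h = 0 := by
  by_cases h1 : g < d + 1
  · by_cases h2 : h < d + 1
    · have key := L.strid0 ⟨g, h1⟩ ⟨h, h2⟩ (by simp; omega)
      rw [R.Es_A_Es ⟨g, h1⟩ ⟨h, h2⟩] at key
      rcases smul_eq_zero.mp key with hc | hc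
      · unfold Rep.B at hc ⊢
        simpa [Rep.vN, Rep.uN, h1, h2] using hc
      · exact absurd hc (vmv_ne_zero (R.u_ne _) (R.v_ne _))
    · unfold Rep.B Rep.uN
      rw [dif_neg h2]
      simp [Matrix.mulVec_zero]
  · unfold Rep.B Rep.vN
    rw [dif_neg h1]
    simp [dotProduct]

lemma Rep.Bs_zero {g h : ℕ} (hgh : g > h + 1 ∨ h > g + 1) : R.Bs g h = 0 := by
  by_cases h1 : g < d + 1
  · by_cases h2 : h < d + 1
    · have key := L.trid0 ⟨g, h1⟩ ⟨h, h2⟩ (by simp; omega)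
      rw [R.E_As_E ⟨g, h1⟩ ⟨h, h2⟩] at key
      rcases smul_eq_zero.mp key with hc | hc
      · unfold Rep.Bs at hc ⊢
        simpa [Rep.qN, Rep.pN, h1, h2] using hc
      · exact absurd hc (vmv_ne_zero (R.p_ne _) (R.q_ne _))
    · unfold Rep.Bs Rep.pN
      rw [dif_neg h2]
      simp [Matrix.mulVec_zero]
  · unfold Rep.Bs Rep.qN
    rw [dif_neg h1]
    simp [dotProduct]

lemma Rep.B_ne {g h : ℕ} (h1 : g < d + 1) (h2 : h < d + 1)
    (hgh : g = h + 1 ∨ h = g + 1) : R.B g h ≠ 0 := by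
  intro h0
  have key := L.strid1 ⟨g, h1⟩ ⟨h, h2⟩ (by simp; omega)
  apply key
  rw [R.Es_A_Es ⟨g, h1⟩ ⟨h, h2⟩]
  have : R.B ((⟨g, h1⟩ : Fin (d+1)) : ℕ) ((⟨h, h2⟩ : Fin (d+1)) : ℕ) = 0 := h0
  rw [this, zero_smul]

lemma Rep.Bs_ne {g h : ℕ} (h1 : g < d + 1) (h2 : h < d + 1)
    (hgh : g = h + 1 ∨ h = g + 1) : R.Bs g h ≠ 0 := by
  intro h0
  have key := L.trid1 ⟨g, h1⟩ ⟨h, h2⟩ (by simp; omega)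
  apply key
  rw [R.E_As_E ⟨g, h1⟩ ⟨h, h2⟩]
  have : R.Bs ((⟨g, h1⟩ : Fin (d+1)) : ℕ) ((⟨h, h2⟩ : Fin (d+1)) : ℕ) = 0 := h0
  rw [this, zero_smul]

/-- coordinates of `A *ᵥ x` in the `u`-basis -/
lemma Rep.vN_A (g : ℕ) (x : Fin (d+1) → K) :
    R.vN g ⬝ᵥ (L.A *ᵥ x) = ∑ t : Fin (d+1), R.B g t * (R.vN t ⬝ᵥ x) := by
  conv_lhs => rw [R.u_expand x]
  rw [mulVec_sumF, dot_sumF]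
  refine Finset.sum_congr rfl fun t _ => ?_
  rw [Matrix.mulVec_smul, dotProduct_smul]
  unfold Rep.B
  simp [smul_eq_mul]
  ring

lemma Rep.qN_As (g : ℕ) (x : Fin (d+1) → K) :
    R.qN g ⬝ᵥ (L.Astar *ᵥ x) = ∑ t : Fin (d+1), R.Bs g t * (R.qN t ⬝ᵥ x) := by
  conv_lhs => rw [R.p_expand x]
  rw [mulVec_sumF, dot_sumF]
  refine Finset.sum_congr rfl fun t _ => ?_
  rw [Matrix.mulVec_smul, dotProduct_smul]
  unfold Rep.Bs
  simp [smul_eq_mul]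
  ring

/-- `Astar` acts diagonally on `vN`-coordinates -/
lemma Rep.vN_As_diag (h : ℕ) (x : Fin (d+1) → K) :
    R.vN h ⬝ᵥ (L.Astar *ᵥ x) = L.θsN h * (R.vN h ⬝ᵥ x) := by
  conv_lhs => rw [R.u_expand x]
  rw [mulVec_sumF, dot_sumF]
  by_cases hh : h < d + 1
  · rw [Finset.sum_eq_single ⟨h, hh⟩]
    · rw [Matrix.mulVec_smul, dotProduct_smul, R.As_mulVec_uN, dotProduct_smul]
      have : R.vN h ⬝ᵥ R.uN h = 1 := by rw [R.vN_uN]; simp [hh]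
      have hc : ((⟨h, hh⟩ : Fin (d+1)) : ℕ) = h := rfl
      rw [hc, this]
      simp [smul_eq_mul]
      ring
    · intro t _ ht
      rw [Matrix.mulVec_smul, dotProduct_smul, R.As_mulVec_uN, dotProduct_smul]
      have : R.vN h ⬝ᵥ R.uN (t : ℕ) = 0 := by
        rw [R.vN_uN, if_neg]
        intro hc
        exact ht (by ext; simp [← hc.1])
      rw [this]
      ring_nf
    · intro hc
      exact absurd (Finset.mem_univ _) hc
  · unfold Rep.vN
    rw [dif_neg hh]
    simp [dotProduct]

end WithRep

/-- generic products of linear factors -/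
def prodA (L : LeonardSystem K d) (c : ℕ → K) : ℕ → Matrix (Fin (d+1)) (Fin (d+1)) K
  | 0 => 1
  | k + 1 => L.prodA c k * (L.A - c k • 1)

def prodAs (L : LeonardSystem K d) (c : ℕ → K) : ℕ → Matrix (Fin (d+1)) (Fin (d+1)) K
  | 0 => 1
  | k + 1 => L.prodAs c k * (L.Astar - c k • 1)

lemma etaA_eq_prodA (L : LeonardSystem K d) (i : ℕ) :
    L.etaA i = L.prodA (fun t => L.θN (d - t)) i := by
  induction i with
  | zero => rfl
  | succ k ih => rw [LeonardSystem.etaA, LeonardSystem.prodA, ih]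

lemma tausA_eq_prodAs (L : LeonardSystem K d) (i : ℕ) :
    L.tausA i = L.prodAs (fun t => L.θsN t) i := by
  induction i with
  | zero => rfl
  | succ k ih => rw [LeonardSystem.tausA, LeonardSystem.prodAs, ih]

lemma A_comm_prodA (L : LeonardSystem K d) (c : ℕ → K) (k : ℕ) :
    L.A * L.prodA c k = L.prodA c k * L.A := by
  induction k with
  | zero => simp [LeonardSystem.prodA]
  | succ k ih =>
    rw [LeonardSystem.prodA, ← mul_assoc, ih, mul_assoc, mul_assoc]
    congr 1
    simp only [mul_sub, sub_mul, Matrix.smul_mul, Matrix.mul_smul, Matrix.one_mul,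
      Matrix.mul_one]

lemma As_comm_prodAs (L : LeonardSystem K d) (c : ℕ → K) (k : ℕ) :
    L.Astar * L.prodAs c k = L.prodAs c k * L.Astar := by
  induction k with
  | zero => simp [LeonardSystem.prodAs]
  | succ k ih =>
    rw [LeonardSystem.prodAs, ← mul_assoc, ih, mul_assoc, mul_assoc]
    congr 1
    simp only [mul_sub, sub_mul, Matrix.smul_mul, Matrix.mul_smul, Matrix.one_mul,
      Matrix.mul_one]

lemma prodA_succ' (L : LeonardSystem K d) (c : ℕ → K) (k : ℕ) :
    L.prodA c (k+1) = (L.A - c k • 1) * L.prodA c k := by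
  rw [LeonardSystem.prodA, sub_mul, mul_sub, L.A_comm_prodA]
  simp only [Matrix.smul_mul, Matrix.mul_smul, Matrix.one_mul, Matrix.mul_one]

lemma prodAs_succ' (L : LeonardSystem K d) (c : ℕ → K) (k : ℕ) :
    L.prodAs c (k+1) = (L.Astar - c k • 1) * L.prodAs c k := by
  rw [LeonardSystem.prodAs, sub_mul, mul_sub, L.As_comm_prodAs]
  simp only [Matrix.smul_mul, Matrix.mul_smul, Matrix.one_mul, Matrix.mul_one]

section WithRep2
variable {L : LeonardSystem K d} (R : L.Rep)

lemma Rep.prodA_pN (c : ℕ → K) (k : ℕ) (r : ℕ) :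
    L.prodA c k *ᵥ R.pN r = (∏ t ∈ Finset.range k, (L.θN r - c t)) • R.pN r := by
  induction k with
  | zero => simp [LeonardSystem.prodA, Matrix.one_mulVec]
  | succ k ih =>
    rw [LeonardSystem.prodA, ← Matrix.mulVec_mulVec]
    have hfac : (L.A - c k • 1) *ᵥ R.pN r = (L.θN r - c k) • R.pN r := by
      rw [Matrix.sub_mulVec, R.A_mulVec_pN, Matrix.smul_mulVec, Matrix.one_mulVec,
        sub_smul]
    rw [hfac, Matrix.mulVec_smul, ih, Finset.prod_range_succ, smul_smul]
    congr 1
    ring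

lemma Rep.prodAs_uN (c : ℕ → K) (k : ℕ) (r : ℕ) :
    L.prodAs c k *ᵥ R.uN r = (∏ t ∈ Finset.range k, (L.θsN r - c t)) • R.uN r := by
  induction k with
  | zero => simp [LeonardSystem.prodAs, Matrix.one_mulVec]
  | succ k ih =>
    rw [LeonardSystem.prodAs, ← Matrix.mulVec_mulVec]
    have hfac : (L.Astar - c k • 1) *ᵥ R.uN r = (L.θsN r - c k) • R.uN r := by
      rw [Matrix.sub_mulVec, R.As_mulVec_uN, Matrix.smul_mulVec, Matrix.one_mulVec,
        sub_smul]
    rw [hfac, Matrix.mulVec_smul, ih, Finset.prod_range_succ, smul_smul]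
    congr 1
    ring

/-- band lemma: applying a degree-`k` product of factors `A - c•1` raises the
`vN`-support by at most `k`. -/
lemma Rep.band_A (c : ℕ → K) (k : ℕ) (x : Fin (d+1) → K) (h : ℕ)
    (hx : ∀ g : ℕ, g > h → R.vN g ⬝ᵥ x = 0) :
    ∀ g : ℕ, g > h + k → R.vN g ⬝ᵥ (L.prodA c k *ᵥ x) = 0 := by
  induction k with
  | zero =>
    intro g hg
    simpa [LeonardSystem.prodA, Matrix.one_mulVec] using hx g (by omega)
  | succ k ih =>
    intro g hg
    rw [L.prodA_succ', ← Matrix.mulVec_mulVec, Matrix.sub_mulVec, dotProduct_sub,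
      Matrix.smul_mulVec, Matrix.one_mulVec, dotProduct_smul]
    have h2 : R.vN g ⬝ᵥ (L.prodA c k *ᵥ x) = 0 := ih g (by omega)
    rw [R.vN_A, h2]
    have : ∀ t : Fin (d+1), R.B g (t : ℕ) * (R.vN (t : ℕ) ⬝ᵥ (L.prodA c k *ᵥ x)) = 0 := by
      intro t
      by_cases ht : (t : ℕ) > h + k
      · rw [ih (t : ℕ) ht, mul_zero]
      · rw [R.B_zero (by left; omega), zero_mul]
    rw [Finset.sum_eq_zero fun t _ => this t]
    simp

lemma Rep.band_As (c : ℕ → K) (k : ℕ) (x : Fin (d+1) → K) (h : ℕ)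
    (hx : ∀ g : ℕ, g > h → R.qN g ⬝ᵥ x = 0) :
    ∀ g : ℕ, g > h + k → R.qN g ⬝ᵥ (L.prodAs c k *ᵥ x) = 0 := by
  induction k with
  | zero =>
    intro g hg
    simpa [LeonardSystem.prodAs, Matrix.one_mulVec] using hx g (by omega)
  | succ k ih =>
    intro g hg
    rw [L.prodAs_succ', ← Matrix.mulVec_mulVec, Matrix.sub_mulVec, dotProduct_sub,
      Matrix.smul_mulVec, Matrix.one_mulVec, dotProduct_smul]
    have h2 : R.qN g ⬝ᵥ (L.prodAs c k *ᵥ x) = 0 := ih g (by omega)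
    rw [R.qN_As, h2]
    have : ∀ t : Fin (d+1), R.Bs g (t : ℕ) * (R.qN (t : ℕ) ⬝ᵥ (L.prodAs c k *ᵥ x)) = 0 := by
      intro t
      by_cases ht : (t : ℕ) > h + k
      · rw [ih (t : ℕ) ht, mul_zero]
      · rw [R.Bs_zero (by left; omega), zero_mul]
    rw [Finset.sum_eq_zero fun t _ => this t]
    simp

/-- sharp lemma: the top coordinate after applying the product. -/
lemma Rep.sharp_A (c : ℕ → K) (k : ℕ) (x : Fin (d+1) → K) (h : ℕ)
    (hx : ∀ g : ℕ, g > h → R.vN g ⬝ᵥ x = 0) (hhk : h + k ≤ d) :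
    R.vN (h + k) ⬝ᵥ (L.prodA c k *ᵥ x)
      = (∏ t ∈ Finset.range k, R.B (h + t + 1) (h + t)) * (R.vN h ⬝ᵥ x) := by
  induction k with
  | zero => simp [LeonardSystem.prodA, Matrix.one_mulVec]
  | succ k ih =>
    rw [L.prodA_succ', ← Matrix.mulVec_mulVec, Matrix.sub_mulVec, dotProduct_sub,
      Matrix.smul_mulVec, Matrix.one_mulVec, dotProduct_smul, R.vN_A]
    have hband := R.band_A c k x h hx
    have htop : R.vN (h + (k+1)) ⬝ᵥ (L.prodA c k *ᵥ x) = 0 := hband _ (by omega)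
    have hsum : ∑ t : Fin (d+1), R.B (h + (k+1)) (t : ℕ) * (R.vN (t : ℕ) ⬝ᵥ (L.prodA c k *ᵥ x))
        = R.B (h + k + 1) (h + k) * (R.vN (h + k) ⬝ᵥ (L.prodA c k *ᵥ x)) := by
      have hk1 : h + k < d + 1 := by omega
      have hval : ((⟨h + k, hk1⟩ : Fin (d+1)) : ℕ) = h + k := rfl
      rw [Finset.sum_eq_single (⟨h + k, hk1⟩ : Fin (d+1))]
      · rw [hval]
        have he : h + (k+1) = h + k + 1 := by omega
        rw [he]
      · intro t _ ht
        by_cases htk : (t : ℕ) > h + k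
        · rw [hband (t : ℕ) htk, mul_zero]
        · have : (t : ℕ) < h + k := by
            rcases Nat.lt_or_ge (t : ℕ) (h + k) with hlt | hge
            · exact hlt
            · exact absurd (Fin.ext (by rw [hval]; omega)) ht
          rw [R.B_zero (by left; omega), zero_mul]
      · intro hc
        exact absurd (Finset.mem_univ _) hc
    rw [hsum, htop, ih (by omega), Finset.prod_range_succ]
    simp only [smul_zero, sub_zero]
    ring

lemma Rep.sharp_As (c : ℕ → K) (k : ℕ) (x : Fin (d+1) → K) (h : ℕ)
    (hx : ∀ g : ℕ, g > h → R.qN g ⬝ᵥ x = 0) (hhk : h + k ≤ d) :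
    R.qN (h + k) ⬝ᵥ (L.prodAs c k *ᵥ x)
      = (∏ t ∈ Finset.range k, R.Bs (h + t + 1) (h + t)) * (R.qN h ⬝ᵥ x) := by
  induction k with
  | zero => simp [LeonardSystem.prodAs, Matrix.one_mulVec]
  | succ k ih =>
    rw [L.prodAs_succ', ← Matrix.mulVec_mulVec, Matrix.sub_mulVec, dotProduct_sub,
      Matrix.smul_mulVec, Matrix.one_mulVec, dotProduct_smul, R.qN_As]
    have hband := R.band_As c k x h hx
    have htop : R.qN (h + (k+1)) ⬝ᵥ (L.prodAs c k *ᵥ x) = 0 := hband _ (by omega)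
    have hsum : ∑ t : Fin (d+1), R.Bs (h + (k+1)) (t : ℕ) * (R.qN (t : ℕ) ⬝ᵥ (L.prodAs c k *ᵥ x))
        = R.Bs (h + k + 1) (h + k) * (R.qN (h + k) ⬝ᵥ (L.prodAs c k *ᵥ x)) := by
      have hk1 : h + k < d + 1 := by omega
      have hval : ((⟨h + k, hk1⟩ : Fin (d+1)) : ℕ) = h + k := rfl
      rw [Finset.sum_eq_single (⟨h + k, hk1⟩ : Fin (d+1))]
      · rw [hval]
        have he : h + (k+1) = h + k + 1 := by omega
        rw [he]
      · intro t _ ht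
        by_cases htk : (t : ℕ) > h + k
        · rw [hband (t : ℕ) htk, mul_zero]
        · have : (t : ℕ) < h + k := by
            rcases Nat.lt_or_ge (t : ℕ) (h + k) with hlt | hge
            · exact hlt
            · exact absurd (Fin.ext (by rw [hval]; omega)) ht
          rw [R.Bs_zero (by left; omega), zero_mul]
      · intro hc
        exact absurd (Finset.mem_univ _) hc
    rw [hsum, htop, ih (by omega), Finset.prod_range_succ]
    simp only [smul_zero, sub_zero]
    ring


/-- coordinates after applying a product of `A`-factors -/
lemma Rep.qN_prodA (c : ℕ → K) (k : ℕ) (r : ℕ) (x : Fin (d+1) → K) :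
    R.qN r ⬝ᵥ (L.prodA c k *ᵥ x)
      = (∏ t ∈ Finset.range k, (L.θN r - c t)) * (R.qN r ⬝ᵥ x) := by
  conv_lhs => rw [R.p_expand x]
  rw [mulVec_sumF, dot_sumF]
  conv_rhs => rw [R.p_expand x]
  rw [dot_sumF, Finset.mul_sum]
  refine Finset.sum_congr rfl fun t _ => ?_
  rw [Matrix.mulVec_smul, R.prodA_pN, dotProduct_smul, dotProduct_smul, dotProduct_smul]
  rw [R.qN_pN]
  by_cases hrt : r = (t : ℕ)
  · subst hrt
    simp [smul_eq_mul]
    ring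
  · simp [hrt, smul_eq_mul]

/-- kill lemma for `A`-products -/
lemma Rep.kill_A (b : ℕ) (x : Fin (d+1) → K)
    (hx : ∀ r : ℕ, r > b → R.qN r ⬝ᵥ x = 0) :
    L.prodA (fun t => L.θN t) (b+1) *ᵥ x = 0 := by
  conv_lhs => rw [R.p_expand x]
  rw [mulVec_sumF]
  refine Finset.sum_eq_zero fun r _ => ?_
  by_cases hr : (r : ℕ) > b
  · rw [hx (r : ℕ) hr, zero_smul, Matrix.mulVec_zero]
  · rw [Matrix.mulVec_smul, R.prodA_pN]
    have : (∏ t ∈ Finset.range (b+1), (L.θN (r : ℕ) - L.θN t)) = 0 := by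
      refine Finset.prod_eq_zero (Finset.mem_range.mpr (by omega : (r : ℕ) < b + 1)) ?_
      simp
    rw [this, zero_smul, smul_zero]

/-- kill lemma for `Astar`-products -/
lemma Rep.kill_As (a len : ℕ) (x : Fin (d+1) → K)
    (hx : ∀ h : ℕ, (h < a ∨ h ≥ a + len) → R.vN h ⬝ᵥ x = 0) :
    L.prodAs (fun t => L.θsN (a + t)) len *ᵥ x = 0 := by
  conv_lhs => rw [R.u_expand x]
  rw [mulVec_sumF]
  refine Finset.sum_eq_zero fun h _ => ?_
  by_cases hr : (h : ℕ) < a ∨ (h : ℕ) ≥ a + len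
  · rw [hx (h : ℕ) hr, zero_smul, Matrix.mulVec_zero]
  · push_neg at hr
    rw [Matrix.mulVec_smul, R.prodAs_uN]
    have : (∏ t ∈ Finset.range len, (L.θsN (h : ℕ) - L.θsN (a + t))) = 0 := by
      refine Finset.prod_eq_zero (Finset.mem_range.mpr (by omega : (h : ℕ) - a < len)) ?_
      have : a + ((h : ℕ) - a) = (h : ℕ) := by omega
      rw [this]
      simp
    rw [this, zero_smul, smul_zero]

/-- existence of top coordinates -/
lemma Rep.exists_vtop {x : Fin (d+1) → K} (hx : x ≠ 0) :
    ∃ h : Fin (d+1), R.vN (h : ℕ) ⬝ᵥ x ≠ 0 ∧ ∀ g : ℕ, g > (h : ℕ) → R.vN g ⬝ᵥ x = 0 := by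
  classical
  set S := Finset.univ.filter (fun h : Fin (d+1) => R.vN (h : ℕ) ⬝ᵥ x ≠ 0) with hS
  have hSne : S.Nonempty := by
    by_contra hc
    rw [Finset.not_nonempty_iff_eq_empty] at hc
    apply hx
    apply R.eq_zero_of_vN
    intro h
    by_contra hne
    have : h ∈ S := by simp [hS, hne]
    rw [hc] at this
    exact absurd this (Finset.notMem_empty _)
  refine ⟨S.max' hSne, ?_, ?_⟩
  · have := S.max'_mem hSne
    simpa [hS] using this
  · intro g hg
    by_cases hgd : g < d + 1
    · by_contra hne
      have hmem : (⟨g, hgd⟩ : Fin (d+1)) ∈ S := by simp [hS, hne]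
      have := S.le_max' _ hmem
      rw [Fin.le_iff_val_le_val] at this
      simp only [] at this
      omega
    · unfold Rep.vN
      rw [dif_neg hgd]
      simp [dotProduct]

lemma Rep.exists_qtop {x : Fin (d+1) → K} (hx : x ≠ 0) :
    ∃ h : Fin (d+1), R.qN (h : ℕ) ⬝ᵥ x ≠ 0 ∧ ∀ g : ℕ, g > (h : ℕ) → R.qN g ⬝ᵥ x = 0 := by
  classical
  set S := Finset.univ.filter (fun h : Fin (d+1) => R.qN (h : ℕ) ⬝ᵥ x ≠ 0) with hS
  have hSne : S.Nonempty := by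
    by_contra hc
    rw [Finset.not_nonempty_iff_eq_empty] at hc
    apply hx
    apply R.eq_zero_of_qN
    intro h
    by_contra hne
    have : h ∈ S := by simp [hS, hne]
    rw [hc] at this
    exact absurd this (Finset.notMem_empty _)
  refine ⟨S.max' hSne, ?_, ?_⟩
  · have := S.max'_mem hSne
    simpa [hS] using this
  · intro g hg
    by_cases hgd : g < d + 1
    · by_contra hne
      have hmem : (⟨g, hgd⟩ : Fin (d+1)) ∈ S := by simp [hS, hne]
      have := S.le_max' _ hmem
      rw [Fin.le_iff_val_le_val] at this
      simp only [] at this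
      omega
    · unfold Rep.qN
      rw [dif_neg hgd]
      simp [dotProduct]

/-- distinctness of eigenvalues, ℕ-indexed -/
lemma θN_ne (L : LeonardSystem K d) {a b : ℕ} (ha : a < d + 1) (hb : b < d + 1)
    (hab : a ≠ b) : L.θN a ≠ L.θN b := by
  unfold LeonardSystem.θN
  rw [dif_pos ha, dif_pos hb]
  intro h
  exact hab (by simpa using congrArg Fin.val (L.θ_inj h))

lemma θsN_ne (L : LeonardSystem K d) {a b : ℕ} (ha : a < d + 1) (hb : b < d + 1)
    (hab : a ≠ b) : L.θsN a ≠ L.θsN b := by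
  unfold LeonardSystem.θsN
  rw [dif_pos ha, dif_pos hb]
  intro h
  exact hab (by simpa using congrArg Fin.val (L.θs_inj h))

/-- the bottom coordinate of `u 0` is nonzero -/
lemma Rep.xi0_ne : R.qN 0 ⬝ᵥ R.uN 0 ≠ 0 := by
  intro h0
  have hu0 : R.uN 0 ≠ 0 := by
    intro hc
    have := R.vN_uN 0 0
    rw [hc] at this
    simp [dotProduct] at this
  apply hu0
  apply R.eq_zero_of_qN
  have key : ∀ r : ℕ, r ≤ d → ∀ s : ℕ, s ≤ r → R.qN s ⬝ᵥ R.uN 0 = 0 := by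
    intro r
    induction r with
    | zero =>
      intro _ s hs
      have : s = 0 := by omega
      rw [this]
      exact h0
    | succ r ih =>
      intro hr s hs
      by_cases hsr : s ≤ r
      · exact ih (by omega) s hsr
      · have hs1 : s = r + 1 := by omega
        subst hs1
        -- row equation at r
        have hrow : R.qN r ⬝ᵥ (L.Astar *ᵥ R.uN 0) = L.θsN 0 * (R.qN r ⬝ᵥ R.uN 0) := by
          rw [R.As_mulVec_uN, dotProduct_smul, smul_eq_mul]
        rw [R.qN_As] at hrow
        rw [ih (by omega) r (le_refl r), mul_zero] at hrow
        have hsum : ∑ t : Fin (d+1), R.Bs r (t : ℕ) * (R.qN (t : ℕ) ⬝ᵥ R.uN 0)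
            = R.Bs r (r+1) * (R.qN (r+1) ⬝ᵥ R.uN 0) := by
          have hr1 : r + 1 < d + 1 := by omega
          have hval : ((⟨r + 1, hr1⟩ : Fin (d+1)) : ℕ) = r + 1 := rfl
          rw [Finset.sum_eq_single (⟨r + 1, hr1⟩ : Fin (d+1))]
          · intro t _ ht
            by_cases htr : (t : ℕ) ≤ r
            · rw [ih (by omega) (t : ℕ) htr, mul_zero]
            · have htv : (t : ℕ) ≥ r + 2 := by
                rcases Nat.lt_or_ge (t : ℕ) (r + 2) with hlt | hge
                · exact absurd (Fin.ext (by rw [hval]; omega)) ht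
                · exact hge
              rw [R.Bs_zero (by right; omega), zero_mul]
          · intro hc
            exact absurd (Finset.mem_univ _) hc
        rw [hsum] at hrow
        have hBs : R.Bs r (r+1) ≠ 0 := R.Bs_ne (by omega) (by omega) (by right; rfl)
        rcases mul_eq_zero.mp hrow with h | h
        · exact absurd h hBs
        · exact h
  intro r
  exact key d d.le_refl (r : ℕ) (by omega)


/-- the split vectors `w i = η_i(A) u₀` -/
def Rep.w (i : ℕ) : Fin (d+1) → K := L.etaA i *ᵥ R.uN 0

def Rep.T (i : ℕ) : K := R.vN 0 ⬝ᵥ R.w i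

lemma Rep.uN_zero_eq : R.uN 0 = R.u 0 := by
  unfold Rep.uN
  rw [dif_pos (by omega : (0:ℕ) < d + 1)]
  congr

lemma Rep.vN_zero_eq : R.vN 0 = R.v 0 := by
  unfold Rep.vN
  rw [dif_pos (by omega : (0:ℕ) < d + 1)]
  congr

lemma Rep.T_trace (i : ℕ) : (L.etaA i * L.Estar 0).trace = R.T i := by
  rw [R.hEs 0, trace_mul_vmv]
  unfold Rep.T Rep.w
  rw [R.uN_zero_eq, R.vN_zero_eq]

/-- F0: `p`-coordinates of `w i` -/
lemma Rep.qN_w (i r : ℕ) :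
    R.qN r ⬝ᵥ R.w i
      = (∏ t ∈ Finset.range i, (L.θN r - L.θN (d - t))) * (R.qN r ⬝ᵥ R.uN 0) := by
  unfold Rep.w
  rw [L.etaA_eq_prodA, R.qN_prodA]

/-- F1: `u`-support of `w i` is `[0, i]` -/
lemma Rep.vN_w_zero {i h : ℕ} (hh : h > i) : R.vN h ⬝ᵥ R.w i = 0 := by
  unfold Rep.w
  rw [L.etaA_eq_prodA]
  refine R.band_A _ i (R.uN 0) 0 ?_ h (by omega)
  intro g hg
  rw [R.vN_uN, if_neg (by omega)]

/-- F2: `p`-support of `w i` is `[0, d-i]` -/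
lemma Rep.qN_w_zero {i r : ℕ} (hr : r + i > d) : R.qN r ⬝ᵥ R.w i = 0 := by
  rw [R.qN_w]
  by_cases hrd : r < d + 1
  · have : (∏ t ∈ Finset.range i, (L.θN r - L.θN (d - t))) = 0 := by
      refine Finset.prod_eq_zero (Finset.mem_range.mpr (by omega : d - r < i)) ?_
      have : d - (d - r) = r := by omega
      rw [this]
      simp
    rw [this, zero_mul]
  · have : R.qN r ⬝ᵥ R.uN 0 = 0 := by
      unfold Rep.qN
      rw [dif_neg hrd]
      simp [dotProduct]
    rw [this, mul_zero]

/-- F3: bottom coordinate of `w i` -/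
lemma Rep.qN_w_ne {i : ℕ} (hi : i ≤ d) : R.qN 0 ⬝ᵥ R.w i ≠ 0 := by
  rw [R.qN_w]
  refine mul_ne_zero ?_ R.xi0_ne
  refine Finset.prod_ne_zero_iff.mpr fun t ht => ?_
  rw [Finset.mem_range] at ht
  refine sub_ne_zero.mpr ?_
  exact L.θN_ne (by omega) (by omega) (by omega)

lemma Rep.w_ne {i : ℕ} (hi : i ≤ d) : R.w i ≠ 0 := by
  intro hc
  apply R.qN_w_ne hi
  rw [hc]
  simp [dotProduct]

/-- L1: transversality vanishing lemma -/
lemma Rep.zero_of_supports (i' : ℕ) (hi : i' + 1 ≤ d) (x : Fin (d+1) → K)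
    (ha : ∀ r : ℕ, r > d - i' → R.qN r ⬝ᵥ x = 0)
    (hb : ∀ h : ℕ, h ≥ i' → R.vN h ⬝ᵥ x = 0) : x = 0 := by
  by_contra hx
  obtain ⟨h0, hne, htop⟩ := R.exists_vtop hx
  have hh0 : (h0 : ℕ) < i' := by
    by_contra hc
    exact hne (hb _ (by omega))
  have hQ : L.prodA (fun t => L.θN t) (d - i' + 1) *ᵥ x = 0 := R.kill_A (d - i') x ha
  have hsharp := R.sharp_A (fun t => L.θN t) (d - i' + 1) x (h0 : ℕ) htop (by omega)
  rw [hQ] at hsharp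
  simp only [dotProduct_zero] at hsharp
  have hprod : (∏ t ∈ Finset.range (d - i' + 1), R.B ((h0:ℕ) + t + 1) ((h0:ℕ) + t)) ≠ 0 := by
    refine Finset.prod_ne_zero_iff.mpr fun t ht => ?_
    rw [Finset.mem_range] at ht
    exact R.B_ne (by omega) (by omega) (by left; rfl)
  exact hne (by
    rcases mul_eq_zero.mp hsharp.symm with h | h
    · exact absurd h hprod
    · exact h)

/-- L2: dual transversality vanishing lemma -/
lemma Rep.zero_of_supports' (i' : ℕ) (hi : i' ≤ d) (x : Fin (d+1) → K)
    (k1 : R.vN 0 ⬝ᵥ x = 0) (k2 : ∀ h : ℕ, h ≥ i' + 1 → R.vN h ⬝ᵥ x = 0)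
    (k3 : ∀ r : ℕ, r > d - i' → R.qN r ⬝ᵥ x = 0) : x = 0 := by
  by_contra hx
  obtain ⟨m, hne, htop⟩ := R.exists_qtop hx
  have hm : (m : ℕ) ≤ d - i' := by
    by_contra hc
    exact hne (k3 _ (by omega))
  have hQ : L.prodAs (fun t => L.θsN (1 + t)) i' *ᵥ x = 0 := by
    refine R.kill_As 1 i' x fun h hh => ?_
    rcases hh with hh | hh
    · have : h = 0 := by omega
      rw [this]; exact k1
    · exact k2 h (by omega)
  have hsharp := R.sharp_As (fun t => L.θsN (1 + t)) i' x (m : ℕ) htop (by omega)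
  rw [hQ] at hsharp
  simp only [dotProduct_zero] at hsharp
  have hprod : (∏ t ∈ Finset.range i', R.Bs ((m:ℕ) + t + 1) ((m:ℕ) + t)) ≠ 0 := by
    refine Finset.prod_ne_zero_iff.mpr fun t ht => ?_
    rw [Finset.mem_range] at ht
    exact R.Bs_ne (by omega) (by omega) (by left; rfl)
  exact hne (by
    rcases mul_eq_zero.mp hsharp.symm with h | h
    · exact absurd h hprod
    · exact h)


/-- the `u`-coordinates of `(A* - θ*_{i+1})w_{i+1}` -/
lemma Rep.vN_y (i' h : ℕ) :
    R.vN h ⬝ᵥ (L.Astar *ᵥ R.w (i'+1) - L.θsN (i'+1) • R.w (i'+1))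
      = (L.θsN h - L.θsN (i'+1)) * (R.vN h ⬝ᵥ R.w (i'+1)) := by
  rw [dotProduct_sub, dotProduct_smul, R.vN_As_diag]
  simp [smul_eq_mul]
  ring

/-- THE SPLIT RELATION: `(A* - θ*_{i+1}) w_{i+1} = ϕ_{i+1} w_i`. -/
lemma Rep.split (i' : ℕ) (hi : i' + 1 ≤ d) :
    L.Astar *ᵥ R.w (i'+1) - L.θsN (i'+1) • R.w (i'+1) = L.phi (i'+1) • R.w i' := by
  set y := L.Astar *ᵥ R.w (i'+1) - L.θsN (i'+1) • R.w (i'+1) with hy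
  -- q-support of y
  have hqy : ∀ r : ℕ, r > d - i' → R.qN r ⬝ᵥ y = 0 := by
    intro r hr
    rw [hy, dotProduct_sub, dotProduct_smul, R.qN_As]
    have h1 : ∑ t : Fin (d+1), R.Bs r (t : ℕ) * (R.qN (t : ℕ) ⬝ᵥ R.w (i'+1)) = 0 := by
      refine Finset.sum_eq_zero fun t _ => ?_
      by_cases ht : (t : ℕ) + (i' + 1) > d
      · rw [R.qN_w_zero ht, mul_zero]
      · rw [R.Bs_zero (by left; omega), zero_mul]
    have h2 : R.qN r ⬝ᵥ R.w (i'+1) = 0 := R.qN_w_zero (by omega)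
    rw [h1, h2]
    simp
  -- v-support of y above i'
  have hvy : ∀ h : ℕ, h > i' → R.vN h ⬝ᵥ y = 0 := by
    intro h hh
    rw [hy, R.vN_y]
    by_cases hh1 : h = i' + 1
    · rw [hh1, sub_self, zero_mul]
    · rw [R.vN_w_zero (by omega), mul_zero]
  -- denominator vN i' ⬝ w i' ≠ 0
  have hden : R.vN i' ⬝ᵥ R.w i' ≠ 0 := by
    intro hc
    apply R.w_ne (by omega : i' ≤ d)
    refine R.zero_of_supports i' hi (R.w i') (fun r hr => R.qN_w_zero (by omega)) ?_
    intro h hh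
    rcases Nat.eq_or_lt_of_le hh with he | hlt
    · rw [← he]; exact hc
    · exact R.vN_w_zero (by omega)
  set lam := (R.vN i' ⬝ᵥ y) / (R.vN i' ⬝ᵥ R.w i') with hlam
  have hyw : y = lam • R.w i' := by
    have hz : y - lam • R.w i' = 0 := by
      refine R.zero_of_supports i' hi _ ?_ ?_
      · intro r hr
        rw [dotProduct_sub, dotProduct_smul, hqy r hr, R.qN_w_zero (by omega)]
        simp
      · intro h hh
        rcases Nat.eq_or_lt_of_le hh with he | hlt
        · rw [← he, dotProduct_sub, dotProduct_smul, hlam, smul_eq_mul,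
            div_mul_cancel₀ _ hden, sub_self]
        · rw [dotProduct_sub, dotProduct_smul, hvy h (by omega), R.vN_w_zero (by omega)]
          simp
    have := sub_eq_zero.mp hz
    exact this
  -- T i' nonzero
  have hT : R.T i' ≠ 0 := by
    intro hc
    apply R.w_ne (by omega : i' ≤ d)
    refine R.zero_of_supports' i' (by omega) (R.w i') hc
      (fun h hh => R.vN_w_zero (by omega)) (fun r hr => R.qN_w_zero (by omega))
  -- identify lam
  have hideq : lam * R.T i' = (L.θsN 0 - L.θsN (i'+1)) * R.T (i'+1) := by
    have h1 : R.vN 0 ⬝ᵥ y = lam * R.T i' := by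
      rw [hyw, dotProduct_smul, smul_eq_mul]
      rfl
    have h2 : R.vN 0 ⬝ᵥ y = (L.θsN 0 - L.θsN (i'+1)) * R.T (i'+1) := by
      rw [hy, R.vN_y]
      rfl
    rw [← h1, h2]
  have hphi : L.phi (i'+1) = lam := by
    unfold LeonardSystem.phi
    rw [Nat.add_sub_cancel, R.T_trace, R.T_trace]
    rw [← hideq]
    field_simp
  rw [hphi, ← hyw]


lemma vmv_smul_left {m : ℕ} (c : K) (z v : Fin m → K) :
    vecMulVec (c • z) v = c • vecMulVec z v := by
  ext a b
  simp [vecMulVec_apply, mul_assoc]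

lemma vmv_zero_left {m : ℕ} (v : Fin m → K) :
    vecMulVec (0 : Fin m → K) v = 0 := by
  ext a b
  simp [vecMulVec_apply]

lemma Rep.Elast_mulVec (z : Fin (d+1) → K) :
    L.E (Fin.last d) *ᵥ z = (R.qN d ⬝ᵥ z) • R.pN d := by
  have hp : R.pN d = R.p (Fin.last d) := by
    have := R.pN_coe (Fin.last d)
    rwa [Fin.val_last] at this
  have hq : R.qN d = R.q (Fin.last d) := by
    have := R.qN_coe (Fin.last d)
    rwa [Fin.val_last] at this
  rw [R.hE, vmv_mulVec, hp, hq]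

/-- off-diagonal vanishing, case `i < j` -/
lemma Rep.offdiag_lt (i j : ℕ) (hij : i < j) (hj : j ≤ d) :
    (L.E (Fin.last d) * L.tausA i) *ᵥ R.w j = 0 := by
  conv_lhs => rw [R.p_expand (R.w j)]
  rw [mulVec_sumF]
  refine Finset.sum_eq_zero fun r _ => ?_
  rw [Matrix.mulVec_smul]
  by_cases hr : (r : ℕ) + j > d
  · rw [R.qN_w_zero hr, zero_smul]
  · rw [← Matrix.mulVec_mulVec, R.Elast_mulVec]
    have hband : R.qN d ⬝ᵥ (L.tausA i *ᵥ R.pN (r : ℕ)) = 0 := by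
      rw [L.tausA_eq_prodAs]
      refine R.band_As _ i (R.pN (r : ℕ)) (r : ℕ) ?_ d (by omega)
      intro g hg
      rw [R.qN_pN, if_neg (by omega)]
    rw [hband, zero_smul, smul_zero]

/-- off-diagonal vanishing, case `j < i` -/
lemma Rep.offdiag_gt (i j : ℕ) (hij : j < i) :
    (L.E (Fin.last d) * L.tausA i) *ᵥ R.w j = 0 := by
  conv_lhs => rw [R.u_expand (R.w j)]
  rw [mulVec_sumF]
  refine Finset.sum_eq_zero fun h _ => ?_
  rw [Matrix.mulVec_smul]
  by_cases hh : (h : ℕ) > j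
  · rw [R.vN_w_zero hh, zero_smul]
  · rw [← Matrix.mulVec_mulVec, L.tausA_eq_prodAs, R.prodAs_uN]
    have : (∏ t ∈ Finset.range i, (L.θsN (h : ℕ) - L.θsN t)) = 0 := by
      refine Finset.prod_eq_zero (Finset.mem_range.mpr (by omega : (h : ℕ) < i)) ?_
      simp
    rw [this, zero_smul, Matrix.mulVec_zero, smul_zero]

/-- the diagonal case -/
lemma Rep.diag : ∀ i : ℕ, i ≤ d →
    (L.E (Fin.last d) * L.tausA i) *ᵥ R.w i
      = L.phiProd i • (L.E (Fin.last d) *ᵥ R.uN 0) := by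
  intro i
  induction i with
  | zero =>
    intro _
    have h1 : L.tausA 0 = 1 := rfl
    have h2 : R.w 0 = R.uN 0 := by
      unfold Rep.w
      rw [show L.etaA 0 = 1 from rfl, Matrix.one_mulVec]
    have h3 : L.phiProd 0 = 1 := by
      unfold LeonardSystem.phiProd
      simp
    rw [h1, h2, h3, mul_one, one_smul]
  | succ i ih =>
    intro hi
    have hsplit := R.split i hi
    have h1 : L.tausA (i+1) = L.tausA i * (L.Astar - L.θsN i • 1) := rfl
    rw [h1, ← mul_assoc, ← Matrix.mulVec_mulVec]
    have h2 : (L.Astar - L.θsN i • 1) *ᵥ R.w (i+1)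
        = L.phi (i+1) • R.w i + (L.θsN (i+1) - L.θsN i) • R.w (i+1) := by
      rw [Matrix.sub_mulVec, Matrix.smul_mulVec, Matrix.one_mulVec]
      rw [← hsplit]
      ext a
      simp [smul_eq_mul]
      ring
    rw [h2, Matrix.mulVec_add, Matrix.mulVec_smul, Matrix.mulVec_smul]
    rw [ih (by omega), R.offdiag_lt i (i+1) (by omega) hi, smul_zero, add_zero]
    rw [smul_smul]
    congr 1
    unfold LeonardSystem.phiProd
    rw [Finset.prod_range_succ]
    ring

end WithRep2
end LeonardSystem
end Aux

/-- `E_d τ*_i(A*) η_j(A) E*_0 = δ_{ij} ϕ_1⋯ϕ_i E_d E*_0`. -/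
theorem LeonardSystem.reduction_eta {K : Type*} [Field K] {d : ℕ}
    (L : LeonardSystem K d) :
    ∀ i j : Fin (d+1),
      L.E (Fin.last d) * L.tausA (i : ℕ) * L.etaA (j : ℕ) * L.Estar 0 =
        if i = j then L.phiProd (i : ℕ) • (L.E (Fin.last d) * L.Estar 0) else 0 := by
  obtain ⟨R⟩ := L.exists_rep
  intro i j
  have key : L.E (Fin.last d) * L.tausA (i : ℕ) * L.etaA (j : ℕ) * L.Estar 0
      = vecMulVec ((L.E (Fin.last d) * L.tausA (i : ℕ)) *ᵥ R.w (j : ℕ)) (R.v 0) := by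
    rw [mul_assoc (L.E (Fin.last d) * L.tausA (i : ℕ)), R.hEs 0, mul_vmv, mul_vmv]
    congr 1
  by_cases hij : i = j
  · subst hij
    rw [if_pos rfl, key, R.diag (i : ℕ) (by omega : (i : ℕ) ≤ d)]
    rw [vmv_smul_left]
    congr 1
    rw [R.hEs 0, mul_vmv, R.uN_zero_eq]
  · rw [if_neg hij, key]
    have hvne : (i : ℕ) ≠ (j : ℕ) := fun h => hij (Fin.ext h)
    rcases Nat.lt_or_ge (i : ℕ) (j : ℕ) with hlt | hge
    · rw [R.offdiag_lt (i : ℕ) (j : ℕ) hlt (by omega : (j : ℕ) ≤ d), vmv_zero_left]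
    · rw [R.offdiag_gt (i : ℕ) (j : ℕ) (by omega), vmv_zero_left]
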